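/- Let τ > 0 and let f ∈ C^∞([0,τ]) satisfy f(0) = 0, f^{(r)}(0) = 0 for all r ≥ 1, and f' > 0, f'' > 0 on (0,τ]. Fix d ∈ (0, τ/4). For γ ∈ (0, π/3) define h(x) = f(x + d/cos γ) on [−d/cos γ, τ − d/cos γ], R_γ(x) = x cos γ + h(x) sin γ, I_γ(x) = −x sin γ + h(x) cos γ, so that R_γ is strictly increasing and f_u := I_γ ∘ R_γ^{−1} is the function whose graph is obtained from the graph of f by translating left by d/cos γ and rotating clockwise by γ; set f_v(t) := f_u(−t). Then for every sufficiently small γ > 0 the domain of f_u contains [−d, d], there exists a unique ε > 0 such that f'(4ε) = tan γ, and for this ε one has f_u'(2ε − d) < 0 < f_v'(d − 2ε). -/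

import Mathlib

open Set Filter Topology Real

noncomputable section

/-- `h(x) = f(x + d / cos γ)`, the leftwards translate of `f`. -/
def hAux (f : ℝ → ℝ) (d γ x : ℝ) : ℝ := f (x + d / Real.cos γ)

/-- The first coordinate of the clockwise rotation by `γ` of the graph of `hAux f d γ`. -/
def RAux (f : ℝ → ℝ) (d γ x : ℝ) : ℝ :=
  x * Real.cos γ + hAux f d γ x * Real.sin γ

/-- The second coordinate of the clockwise rotation by `γ` of the graph of `hAux f d γ`. -/
def IAux (f : ℝ → ℝ) (d γ x : ℝ) : ℝ :=
  -x * Real.sin γ + hAux f d γ x * Real.cos γ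

/-- The domain `[-d/cos γ, τ - d/cos γ]` of `hAux f d γ`. -/
def DomAux (τ d γ : ℝ) : Set ℝ :=
  Set.Icc (-(d / Real.cos γ)) (τ - d / Real.cos γ)

set_option maxHeartbeats 1000000 in
/-- Lemma 4.4 of the paper. Let `f ∈ C^∞([0,τ])` be infinitely flat at `0`
with `f' > 0`, `f'' > 0` on `(0,τ]`, and fix `d ∈ (0, τ/4)`. For every sufficiently
small `γ > 0`: `R_γ` is strictly increasing on the domain of `h`, the domain of
`f_u = I_γ ∘ R_γ⁻¹` contains `[-d, d]`, there is a unique `ε > 0` with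
`f'(4ε) = tan γ`, and for this `ε` one has `f_u'(2ε - d) < 0 < f_v'(d - 2ε)`, where
`f_v(t) = f_u(-t)`. -/
theorem stmt16 (τ : ℝ) (hτ : 0 < τ)
    (f : ℝ → ℝ) (hfsm : ContDiffOn ℝ (⊤ : ℕ∞) f (Set.Icc 0 τ))
    (hf0 : f 0 = 0)
    (hflat : ∀ s : ℕ, 1 ≤ s → iteratedDerivWithin s f (Set.Icc 0 τ) 0 = 0)
    (hf' : ∀ x ∈ Set.Ioc 0 τ, 0 < derivWithin f (Set.Icc 0 τ) x)
    (hf'' : ∀ x ∈ Set.Ioc 0 τ, 0 < iteratedDerivWithin 2 f (Set.Icc 0 τ) x)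
    (d : ℝ) (hd : d ∈ Set.Ioo 0 (τ / 4)) :
    ∃ γ₀ : ℝ, 0 < γ₀ ∧ γ₀ ≤ π / 3 ∧ ∀ γ : ℝ, 0 < γ → γ < γ₀ →
      StrictMonoOn (RAux f d γ) (DomAux τ d γ) ∧
      Set.Icc (-d) d ⊆ RAux f d γ '' DomAux τ d γ ∧
      (∃! ε : ℝ, 0 < ε ∧ 4 * ε ≤ τ ∧
        derivWithin f (Set.Icc 0 τ) (4 * ε) = Real.tan γ) ∧
      ∀ ε : ℝ, (0 < ε ∧ 4 * ε ≤ τ ∧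
          derivWithin f (Set.Icc 0 τ) (4 * ε) = Real.tan γ) →
        ∀ fu : ℝ → ℝ,
          ContDiffOn ℝ (⊤ : ℕ∞) fu (RAux f d γ '' DomAux τ d γ) →
          (∀ x ∈ DomAux τ d γ, fu (RAux f d γ x) = IAux f d γ x) →
          derivWithin fu (RAux f d γ '' DomAux τ d γ) (2 * ε - d) < 0 ∧
          0 < derivWithin (fun t => fu (-t))
              ((fun y => -y) '' (RAux f d γ '' DomAux τ d γ)) (d - 2 * ε) := by
  obtain ⟨hd0, hd4⟩ := hd
  have h0s : (0:ℝ) ∈ Set.Icc 0 τ := ⟨le_rfl, hτ.le⟩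
  have hτs : τ ∈ Set.Icc 0 τ := ⟨hτ.le, le_rfl⟩
  have hus : UniqueDiffOn ℝ (Set.Icc (0:ℝ) τ) := uniqueDiffOn_Icc hτ
  set f' : ℝ → ℝ := derivWithin f (Set.Icc 0 τ) with hf'_def
  have hfc : ContinuousOn f (Set.Icc 0 τ) := hfsm.continuousOn
  have hdiff : DifferentiableOn ℝ f (Set.Icc 0 τ) :=
    hfsm.differentiableOn (by simp)
  have hf'c : ContinuousOn f' (Set.Icc 0 τ) :=
    hfsm.continuousOn_derivWithin hus (WithTop.coe_le_coe.mpr le_top)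
  have hf'diff : DifferentiableOn ℝ f' (Set.Icc 0 τ) :=
    (hfsm.derivWithin hus (m := 1) (WithTop.coe_le_coe.mpr le_top)).differentiableOn one_ne_zero
  have hf'0 : f' 0 = 0 := by
    have h1 := hflat 1 le_rfl
    rwa [iteratedDerivWithin_one] at h1
  have hf''pos : ∀ x ∈ Set.Ioc 0 τ, 0 < derivWithin f' (Set.Icc 0 τ) x := by
    intro x hx
    have hxs : x ∈ Set.Icc 0 τ := ⟨hx.1.le, hx.2⟩
    have h2 := hf'' x hx
    rwa [show (2:ℕ) = 1 + 1 from rfl, iteratedDerivWithin_succ',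
      iteratedDerivWithin_one] at h2
  have hfmono : StrictMonoOn f (Set.Icc 0 τ) := by
    apply strictMonoOn_of_hasDerivWithinAt_pos (convex_Icc 0 τ) hfc (f' := f')
    · intro x hx
      rw [interior_Icc] at hx ⊢
      exact ((hdiff x ⟨hx.1.le, hx.2.le⟩).hasDerivWithinAt).mono Set.Ioo_subset_Icc_self
    · intro x hx
      rw [interior_Icc] at hx
      exact hf' x ⟨hx.1, hx.2.le⟩
  have hf'mono : StrictMonoOn f' (Set.Icc 0 τ) := by
    apply strictMonoOn_of_hasDerivWithinAt_pos (convex_Icc 0 τ) hf'c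
      (f' := derivWithin f' (Set.Icc 0 τ))
    · intro x hx
      rw [interior_Icc] at hx ⊢
      exact ((hf'diff x ⟨hx.1.le, hx.2.le⟩).hasDerivWithinAt).mono Set.Ioo_subset_Icc_self
    · intro x hx
      rw [interior_Icc] at hx
      exact hf''pos x ⟨hx.1, hx.2.le⟩
  have hfnn : ∀ y ∈ Set.Icc (0:ℝ) τ, 0 ≤ f y := by
    intro y hy
    rcases hy.1.eq_or_lt with h | h
    · rw [← h, hf0]
    · have := hfmono h0s hy h
      linarith [hf0]
  have h4ds : (4*d) ∈ Set.Icc (0:ℝ) τ := ⟨by linarith, by linarith⟩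
  have hf'4d : 0 < f' (4*d) := hf' (4*d) ⟨by linarith, by linarith⟩
  refine ⟨min (π/3) (Real.arctan (f' (4*d))), lt_min (by positivity)
    (by rw [← Real.arctan_zero]; exact Real.arctan_strictMono hf'4d),
    min_le_left _ _, ?_⟩
  intro γ hγ0 hγ1
  have hγπ3 : γ < π/3 := hγ1.trans_le (min_le_left _ _)
  have hγarc : γ < Real.arctan (f' (4*d)) := hγ1.trans_le (min_le_right _ _)
  have hπ : 0 < π := Real.pi_pos
  have hcos : 1/2 < Real.cos γ := by
    have := Real.cos_lt_cos_of_nonneg_of_le_pi hγ0.le (by linarith) hγπ3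
    rwa [Real.cos_pi_div_three] at this
  have hcospos : 0 < Real.cos γ := by linarith
  have hcosle : Real.cos γ ≤ 1 := Real.cos_le_one γ
  have hsin : 0 < Real.sin γ := Real.sin_pos_of_pos_of_lt_pi hγ0 (by linarith)
  have htanpos : 0 < Real.tan γ := Real.tan_pos_of_pos_of_lt_pi_div_two hγ0 (by linarith)
  have htanlt : Real.tan γ < f' (4*d) := by
    have := Real.tan_lt_tan_of_lt_of_lt_pi_div_two (by linarith)
      (Real.arctan_lt_pi_div_two _) hγarc
    rwa [Real.tan_arctan] at this
  have hsc : Real.sin γ = Real.tan γ * Real.cos γ := by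
    rw [Real.tan_eq_sin_div_cos]; field_simp
  obtain ⟨c, hc_def⟩ : ∃ c : ℝ, c = d / Real.cos γ := ⟨_, rfl⟩
  have hc0 : 0 < c := by rw [hc_def]; positivity
  have hcc : c * Real.cos γ = d := by rw [hc_def]; exact div_mul_cancel₀ _ hcospos.ne'
  have hdc : d ≤ c := by nlinarith
  have hDom : DomAux τ d γ = Set.Icc (-c) (τ - c) := by rw [DomAux, hc_def]
  have hhEq : ∀ x : ℝ, hAux f d γ x = f (x + c) := by
    intro x; rw [hAux, hc_def]
  have hREq : ∀ x : ℝ, RAux f d γ x = x * Real.cos γ + f (x + c) * Real.sin γ := by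
    intro x; rw [RAux, hhEq]
  have hIEq : ∀ x : ℝ, IAux f d γ x = -x * Real.sin γ + f (x + c) * Real.cos γ := by
    intro x; rw [IAux, hhEq]
  have hAB : -c < τ - c := by linarith
  have maps : Set.MapsTo (fun x => x + c) (DomAux τ d γ) (Set.Icc 0 τ) := by
    intro x hx
    rw [hDom, Set.mem_Icc] at hx
    show x + c ∈ Set.Icc 0 τ
    rw [Set.mem_Icc]
    exact ⟨by linarith [hx.1], by linarith [hx.2]⟩
  -- Part A: strict monotonicity of RAux
  have hRmono : StrictMonoOn (RAux f d γ) (DomAux τ d γ) := by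
    intro x hx y hy hxy
    have h1 : f (x + c) ≤ f (y + c) :=
      hfmono.monotoneOn (maps hx) (maps hy) (show x + c ≤ y + c by linarith)
    rw [hREq, hREq]
    nlinarith
  -- continuity of RAux on the domain
  have hRc : ContinuousOn (RAux f d γ) (DomAux τ d γ) := by
    have h1 : ContinuousOn (fun x => f (x + c)) (DomAux τ d γ) :=
      hfc.comp ((continuous_id.add continuous_const).continuousOn) maps
    have h2 : ContinuousOn
        (fun x => x * Real.cos γ + f (x + c) * Real.sin γ) (DomAux τ d γ) :=
      (continuousOn_id.mul continuousOn_const).add (h1.mul continuousOn_const)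
    exact h2.congr (fun x _ => hREq x)
  have hRA : RAux f d γ (-c) = -d := by
    rw [hREq, show -c + c = 0 by ring, hf0]
    nlinarith
  have hRB : d ≤ RAux f d γ (τ - c) := by
    rw [hREq, show τ - c + c = τ by ring]
    have hfτ : 0 ≤ f τ := hfnn τ hτs
    nlinarith
  -- Part B: [-d, d] is contained in the image
  have hsub : Set.Icc (-d) d ⊆ RAux f d γ '' DomAux τ d γ := by
    intro z hz
    have h1 := intermediate_value_Icc hAB.le (hDom ▸ hRc)
    rw [hDom]
    exact h1 ⟨by rw [hRA]; exact hz.1, le_trans hz.2 hRB⟩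
  -- Part C: existence and uniqueness of ε
  have hεu : ∃! ε : ℝ, 0 < ε ∧ 4 * ε ≤ τ ∧ f' (4 * ε) = Real.tan γ := by
    have hIVT := intermediate_value_Icc (by linarith : (0:ℝ) ≤ 4*d)
      (hf'c.mono (Set.Icc_subset_Icc le_rfl (by linarith)))
    obtain ⟨x, hxmem, hxval⟩ := hIVT ⟨by rw [hf'0]; exact htanpos.le, htanlt.le⟩
    have hx0 : 0 < x := by
      rcases hxmem.1.eq_or_lt with h | h
      · exfalso; rw [← h, hf'0] at hxval; linarith
      · exact h
    refine ⟨x/4, ⟨by linarith, by rw [show 4*(x/4) = x by ring]; linarith [hxmem.2],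
      by rw [show 4*(x/4) = x by ring]; exact hxval⟩, ?_⟩
    rintro ε' ⟨hε'0, hε'τ, hε'val⟩
    have h1 : (4*ε') ∈ Set.Icc (0:ℝ) τ := ⟨by linarith, hε'τ⟩
    have h2 : x ∈ Set.Icc (0:ℝ) τ := ⟨hx0.le, by linarith [hxmem.2]⟩
    have := hf'mono.injOn h1 h2 (by rw [hε'val, hxval])
    linarith
  refine ⟨hRmono, hsub, hεu, ?_⟩
  -- Part D
  rintro ε ⟨hε0, hετ, hεtan⟩ fu hfusm hfueq
  have h4εs : (4*ε) ∈ Set.Icc (0:ℝ) τ := ⟨by linarith, hετ⟩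
  have hεd : ε < d := by
    by_contra h
    push_neg at h
    have : f' (4*d) ≤ f' (4*ε) := hf'mono.monotoneOn h4ds h4εs (by linarith)
    rw [hεtan] at this
    linarith
  have hmemIcc : (2*ε - d) ∈ Set.Icc (-d) d := ⟨by linarith, by linarith⟩
  obtain ⟨x₀, hx₀dom, hx₀val⟩ := hsub hmemIcc
  have hx₁dom : (4*ε - c) ∈ DomAux τ d γ := by
    rw [hDom]; exact ⟨by linarith, by linarith⟩
  have hfε : 0 < f (4*ε) := by
    have := hfmono h0s h4εs (by linarith)
    linarith [hf0]
  have hRx₁ : RAux f d γ (4*ε - c) = 4*ε*Real.cos γ - d + f (4*ε) * Real.sin γ := by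
    rw [hREq, show 4*ε - c + c = 4*ε by ring]
    nlinarith
  have hRlt : RAux f d γ x₀ < RAux f d γ (4*ε - c) := by
    rw [hx₀val, hRx₁]; nlinarith
  have hx01 : x₀ < 4*ε - c := by
    by_contra h
    push_neg at h
    rcases h.eq_or_lt with h | h
    · rw [h] at hRlt; linarith
    · have := hRmono hx₁dom hx₀dom h
      linarith
  have hy₀s : x₀ + c ∈ Set.Icc (0:ℝ) τ := maps hx₀dom
  have hy₀lt : f' (x₀ + c) < Real.tan γ := by
    rw [← hεtan]
    exact hf'mono hy₀s h4εs (by linarith)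
  have hy₀nn : 0 ≤ f' (x₀ + c) := by
    rcases hy₀s.1.eq_or_lt with h | h
    · rw [← h, hf'0]
    · exact (hf' _ ⟨h, hy₀s.2⟩).le
  -- derivative computations
  have huDom : UniqueDiffOn ℝ (DomAux τ d γ) := by rw [hDom]; exact uniqueDiffOn_Icc hAB
  have hf_at : HasDerivWithinAt f (f' (x₀ + c)) (Set.Icc 0 τ) (x₀ + c) :=
    (hdiff _ hy₀s).hasDerivWithinAt
  have hg : HasDerivWithinAt (fun x : ℝ => x + c) 1 (DomAux τ d γ) x₀ :=
    (hasDerivWithinAt_id x₀ _).add_const c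
  have hh : HasDerivWithinAt (hAux f d γ) (f' (x₀ + c)) (DomAux τ d γ) x₀ := by
    have h1 := hf_at.comp x₀ hg maps
    have h2 : HasDerivWithinAt (fun x => f (x + c)) (f' (x₀ + c)) (DomAux τ d γ) x₀ := by
      exact (by simpa using h1 : HasDerivWithinAt (f ∘ fun x => x + c) (f' (x₀ + c)) (DomAux τ d γ) x₀)
    exact h2.congr_of_mem (fun y _ => hhEq y) hx₀dom
  have hR' : HasDerivWithinAt (RAux f d γ)
      (Real.cos γ + f' (x₀ + c) * Real.sin γ) (DomAux τ d γ) x₀ := by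
    have h1 := ((hasDerivWithinAt_id x₀ (DomAux τ d γ)).mul_const (Real.cos γ)).add
      (hh.mul_const (Real.sin γ))
    have h2 : HasDerivWithinAt (fun x => x * Real.cos γ + hAux f d γ x * Real.sin γ)
        (Real.cos γ + f' (x₀ + c) * Real.sin γ) (DomAux τ d γ) x₀ := by
      exact (by simpa using h1 : HasDerivWithinAt ((fun y => y * Real.cos γ) + fun y => hAux f d γ y * Real.sin γ) (Real.cos γ + f' (x₀ + c) * Real.sin γ) (DomAux τ d γ) x₀)
    exact h2.congr_of_mem (fun y _ => rfl) hx₀dom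
  have hI' : HasDerivWithinAt (IAux f d γ)
      (-Real.sin γ + f' (x₀ + c) * Real.cos γ) (DomAux τ d γ) x₀ := by
    have h1 := (((hasDerivWithinAt_id x₀ (DomAux τ d γ)).neg).mul_const (Real.sin γ)).add
      (hh.mul_const (Real.cos γ))
    have h2 : HasDerivWithinAt (fun x => -x * Real.sin γ + hAux f d γ x * Real.cos γ)
        (-Real.sin γ + f' (x₀ + c) * Real.cos γ) (DomAux τ d γ) x₀ := by
      have h3 : -1 * Real.sin γ + f' (x₀ + c) * Real.cos γ
          = -Real.sin γ + f' (x₀ + c) * Real.cos γ := by ring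
      have h4 : (fun x : ℝ => -x * Real.sin γ + hAux f d γ x * Real.cos γ)
          = (fun x : ℝ => (-x) * Real.sin γ + hAux f d γ x * Real.cos γ) := rfl
      rw [h4, ← h3]
      exact h1
    exact h2.congr_of_mem (fun y _ => rfl) hx₀dom
  have hfu_at : HasDerivWithinAt fu
      (derivWithin fu (RAux f d γ '' DomAux τ d γ) (2*ε - d))
      (RAux f d γ '' DomAux τ d γ) (2*ε - d) :=
    (hfusm.differentiableOn (by simp) _ (hsub hmemIcc)).hasDerivWithinAt
  set L := derivWithin fu (RAux f d γ '' DomAux τ d γ) (2*ε - d) with hL_def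
  have hcomp : HasDerivWithinAt (fu ∘ RAux f d γ)
      (L * (Real.cos γ + f' (x₀ + c) * Real.sin γ)) (DomAux τ d γ) x₀ :=
    hfu_at.comp_of_eq x₀ hR' (Set.mapsTo_image _ _) hx₀val.symm
  have hIc : HasDerivWithinAt (IAux f d γ)
      (L * (Real.cos γ + f' (x₀ + c) * Real.sin γ)) (DomAux τ d γ) x₀ :=
    hcomp.congr_of_mem (fun y hy => (hfueq y hy).symm) hx₀dom
  have key : L * (Real.cos γ + f' (x₀ + c) * Real.sin γ)
      = -Real.sin γ + f' (x₀ + c) * Real.cos γ := by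
    rw [← hIc.derivWithin (huDom x₀ hx₀dom), hI'.derivWithin (huDom x₀ hx₀dom)]
  have hR'pos : 0 < Real.cos γ + f' (x₀ + c) * Real.sin γ := by nlinarith
  have hnum : -Real.sin γ + f' (x₀ + c) * Real.cos γ < 0 := by nlinarith
  have hL : L < 0 := by nlinarith
  refine ⟨hL, ?_⟩
  -- the reflected function
  have hnegmaps : Set.MapsTo (fun t : ℝ => -t)
      ((fun y => -y) '' (RAux f d γ '' DomAux τ d γ)) (RAux f d γ '' DomAux τ d γ) := by
    rintro y ⟨z, hz, rfl⟩
    simpa using hz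
  have hneg_at : HasDerivWithinAt (fun t : ℝ => -t) (-1)
      ((fun y => -y) '' (RAux f d γ '' DomAux τ d γ)) (d - 2*ε) := by
    exact (hasDerivWithinAt_id (d - 2*ε)
      ((fun y => -y) '' (RAux f d γ '' DomAux τ d γ))).neg
  have hcomp2 : HasDerivWithinAt (fun t => fu (-t)) (L * (-1))
      ((fun y => -y) '' (RAux f d γ '' DomAux τ d γ)) (d - 2*ε) := by
    have h1 := hfu_at.comp_of_eq (d - 2*ε) hneg_at hnegmaps (by ring)
    exact h1
  have hS_nhds : ((fun y : ℝ => -y) '' (RAux f d γ '' DomAux τ d γ)) ∈ nhds (d - 2*ε) := by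
    apply Filter.mem_of_superset (Ioo_mem_nhds (show -d < d - 2*ε by linarith)
      (show d - 2*ε < d by linarith))
    intro y hy
    exact ⟨-y, hsub ⟨by linarith [hy.1, hy.2], by linarith [hy.1]⟩, by simp⟩
  rw [hcomp2.derivWithin (uniqueDiffWithinAt_of_mem_nhds hS_nhds)]
  nlinarith
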